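/- arXiv:1806.09034 — 3 statements merged into one kernel-verified Lean document; each statement's English description precedes it below -/
import Mathlib

section
/- Let n be a squarefree positive integer and y ≥ n^(1/2) a real number. Then Ω(n) = Σ_{p|n, p≤y} (1 - log p / log y) + log n / log y + Σ_{r≥1} χ_r(n), where χ_r(n) = -(log n / log y - 1 - Σ_{i=1}^{r-1} log p_i / log y) if n = p_1⋯p_r with p_1 < ⋯ < p_{r-1} ≤ y < p_r, and χ_r(n) = 0 otherwise. -/
/-- Identity (1.8): for squarefree `n` and `y ≥ √n`,
`Ω(n) = Σ_{p|n, p≤y} (1 - log p / log y) + log n / log y + Σ_{r≥1} χ_r(n)`,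
where `χ_r(n)` is nonzero only when `n = p₁⋯p_r` with `p₁ < ⋯ < p_{r-1} ≤ y < p_r`
(for squarefree `n` this means `r = Ω(n)` and exactly one prime factor of `n`
exceeds `y`), in which case
`χ_r(n) = -(log n / log y - 1 - Σ_{i=1}^{r-1} log p_i / log y)`. -/
theorem stmt_0 (n : ℕ) (hn : 0 < n) (hsq : Squarefree n) (y : ℝ)
    (hy : Real.sqrt n ≤ y) :
    (n.primeFactorsList.length : ℝ) =
      (∑ p ∈ n.primeFactors.filter (fun p : ℕ => (p : ℝ) ≤ y),
        (1 - Real.log p / Real.log y))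
      + Real.log n / Real.log y
      + ∑ r ∈ Finset.range (n.primeFactorsList.length + 1),
          (if r = n.primeFactorsList.length ∧
              (n.primeFactors.filter (fun p : ℕ => y < (p : ℝ))).card = 1 then
            -(Real.log n / Real.log y - 1
              - ∑ p ∈ n.primeFactors.filter (fun p : ℕ => (p : ℝ) ≤ y),
                  Real.log p / Real.log y)
          else 0) := by
  set S := n.primeFactors with hS
  set A := S.filter (fun p : ℕ => (p : ℝ) ≤ y) with hA
  set B := S.filter (fun p : ℕ => y < (p : ℝ)) with hB
  have hlen : (n.primeFactorsList.length) = S.card := by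
    rw [hS, Nat.primeFactors, List.toFinset_card_of_nodup hsq.nodup_primeFactorsList]
  have hdisj : Disjoint A B := by
    rw [Finset.disjoint_left]
    intro p hp hq
    rw [hA, Finset.mem_filter] at hp
    rw [hB, Finset.mem_filter] at hq
    linarith [hp.2, hq.2]
  have hunion : A ∪ B = S := by
    ext p
    simp only [hA, hB, Finset.mem_union, Finset.mem_filter]
    rcases le_or_gt (p:ℝ) y with h | h <;> tauto
  have hcards : S.card = A.card + B.card := by
    rw [← hunion, Finset.card_union_of_disjoint hdisj]
  have hB1 : B.card ≤ 1 := by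
    by_contra h
    push_neg at h
    obtain ⟨p, hp, q, hq, hpq⟩ := Finset.one_lt_card.mp h
    rw [hB, Finset.mem_filter, hS, Nat.mem_primeFactors] at hp hq
    have hpd : p * q ∣ n :=
      (Nat.Coprime.mul_dvd_of_dvd_of_dvd
        ((Nat.coprime_primes hp.1.1 hq.1.1).mpr hpq) hp.1.2.1 hq.1.2.1)
    have hle : (p * q : ℕ) ≤ n := Nat.le_of_dvd hn hpd
    have h1 : (n : ℝ) < (p : ℝ) * q := by
      have h0 : Real.sqrt n * Real.sqrt n = (n : ℝ) :=
        Real.mul_self_sqrt (by positivity)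
      have hs0 : (0:ℝ) ≤ Real.sqrt n := Real.sqrt_nonneg _
      nlinarith [hp.2, hq.2]
    have := (Nat.cast_le (α := ℝ)).mpr hle
    push_cast at this
    linarith
  have hlog : Real.log n = ∑ p ∈ S, Real.log p := by
    conv_lhs => rw [← Nat.prod_primeFactors_of_squarefree hsq]
    rw [Nat.cast_prod, Real.log_prod]
    intro p hp
    exact_mod_cast (Nat.prime_of_mem_primeFactors hp).pos.ne'
  have hsum : ∑ r ∈ Finset.range (n.primeFactorsList.length + 1),
          (if r = n.primeFactorsList.length ∧ B.card = 1 then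
            -(Real.log n / Real.log y - 1 - ∑ p ∈ A, Real.log p / Real.log y)
          else 0)
      = (if B.card = 1 then
            -(Real.log n / Real.log y - 1 - ∑ p ∈ A, Real.log p / Real.log y)
          else 0) := by
    simp only [ite_and]
    rw [Finset.sum_ite_eq' (Finset.range (n.primeFactorsList.length + 1))]
    simp
  rw [hsum, Finset.sum_sub_distrib, Finset.sum_const, nsmul_eq_mul, mul_one,
    ← Finset.sum_div]
  by_cases hc : B.card = 1
  · rw [if_pos hc]
    have : A.card + 1 = S.card := by omega
    rw [hlen, ← this, hlog, ← hunion, Finset.sum_union hdisj]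
    push_cast
    ring
  · rw [if_neg hc]
    have hB0 : B.card = 0 := by omega
    have hBe : B = ∅ := Finset.card_eq_zero.mp hB0
    have hAS : A = S := by rw [← hunion, hBe, Finset.union_empty]
    rw [hlen, hAS, hlog]
    have hcase : (n : ℝ) = 1 ∨ Real.log y ≠ 0 := by
      rcases eq_or_lt_of_le (Nat.one_le_iff_ne_zero.mpr hn.ne') with h | h
      · left; exact_mod_cast h.symm
      · right
        have h2 : (2:ℕ) ≤ n := h
        have : (1:ℝ) < y := by
          have h3 : (1:ℝ) < Real.sqrt n := by
            rw [show (1:ℝ) = Real.sqrt 1 by simp]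
            exact Real.sqrt_lt_sqrt (by norm_num) (by exact_mod_cast h2)
          linarith
        exact (Real.log_pos this).ne'
    rcases hcase with h1 | hl
    · have : n = 1 := by exact_mod_cast h1
      subst this
      simp
    · have : (∑ p ∈ S, Real.log p) / Real.log y = Real.log n / Real.log y := by
        rw [hlog]
      rw [this]
      ring
end

section
/- For squarefree positive integers d and e, 1/φ(lcm(d,e)) = (1/(φ(d)φ(e))) · Σ_{u | gcd(d,e)} ψ(u), where ψ is the completely multiplicative function with ψ(p) = p - 2 for all primes p. -/
open Nat ArithmeticFunction Finset

/-- For squarefree positive integers `d`, `e`: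
`1/φ(lcm(d,e)) = (1/(φ(d)φ(e))) · Σ_{u ∣ gcd(d,e)} ψ(u)`, where `ψ` is the
completely multiplicative function with `ψ(p) = p - 2` for all primes `p`. -/
theorem stmt_4 (ψ : ℕ → ℝ) (hψ1 : ψ 1 = 1)
    (hψmul : ∀ m n : ℕ, ψ (m * n) = ψ m * ψ n)
    (hψp : ∀ p : ℕ, p.Prime → ψ p = (p : ℝ) - 2)
    (d e : ℕ) (hd : Squarefree d) (he : Squarefree e) (hd0 : 0 < d) (he0 : 0 < e) :
    (1 : ℝ) / ((Nat.lcm d e).totient : ℝ) =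
      (1 / ((d.totient : ℝ) * (e.totient : ℝ))) *
        ∑ u ∈ (Nat.gcd d e).divisors, ψ u := by
  have hψ0 : ψ 0 = 0 := by
    have h2 : ψ 2 = 0 := by rw [hψp 2 Nat.prime_two]; norm_num
    have h := hψmul 0 2
    rw [h2, mul_zero] at h
    simpa using h
  -- arithmetic function version of ψ
  set F : ArithmeticFunction ℝ := ⟨ψ, hψ0⟩ with hF
  have hFmult : F.IsMultiplicative := by
    refine ⟨hψ1, ?_⟩
    intro m n _
    exact hψmul m n
  have hg : Squarefree (Nat.gcd d e) := hd.squarefree_of_dvd (Nat.gcd_dvd_left d e)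
  have hg0 : 0 < Nat.gcd d e := Nat.gcd_pos_of_pos_left e hd0
  -- sum over divisors of gcd
  have hsum : ∑ u ∈ (Nat.gcd d e).divisors, ψ u
      = ∏ p ∈ (Nat.gcd d e).primeFactors, ((p : ℝ) - 1) := by
    have hFe : ∀ n : ℕ, F n = ψ n := fun n => rfl
    calc ∑ u ∈ (Nat.gcd d e).divisors, ψ u
        = ∑ u ∈ (Nat.gcd d e).divisors, F u := by simp [hFe]
      _ = ∏ p ∈ (Nat.gcd d e).primeFactors, (1 + F p) :=
          (hFmult.prodPrimeFactors_one_add_of_squarefree hg).symm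
      _ = ∏ p ∈ (Nat.gcd d e).primeFactors, ((p : ℝ) - 1) := by
          refine Finset.prod_congr rfl fun p hp => ?_
          have hpp : p.Prime := Nat.prime_of_mem_primeFactors hp
          show (1 : ℝ) + ψ p = (p : ℝ) - 1
          rw [hψp p hpp]; ring
  -- totient of a squarefree number
  have htot : ∀ n : ℕ, Squarefree n → 0 < n →
      (n.totient : ℝ) = ∏ p ∈ n.primeFactors, ((p : ℝ) - 1) := by
    intro n hn hn0
    rw [Nat.totient_eq_prod_factorization hn0.ne']
    rw [Nat.prod_factorization_eq_prod_primeFactors]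
    push_cast
    refine Finset.prod_congr rfl fun p hp => ?_
    have h1 : n.factorization p = 1 :=
      Nat.factorization_eq_one_of_squarefree hn (Nat.prime_of_mem_primeFactors hp)
        (Nat.dvd_of_mem_primeFactors hp)
    have hp1 : (1 : ℝ) ≤ (p : ℝ) := by
      exact_mod_cast (Nat.prime_of_mem_primeFactors hp).one_lt.le
    rw [h1]
    push_cast [Nat.cast_sub ((Nat.prime_of_mem_primeFactors hp).one_lt.le)]
    simp
  -- lcm is squarefree
  have hl : Squarefree (Nat.lcm d e) := by
    rw [Nat.squarefree_iff_factorization_le_one (Nat.lcm_ne_zero hd0.ne' he0.ne')]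
    intro p
    rw [Nat.factorization_lcm hd0.ne' he0.ne']
    exact sup_le ((Nat.squarefree_iff_factorization_le_one hd0.ne').mp hd p)
      ((Nat.squarefree_iff_factorization_le_one he0.ne').mp he p)
  have hl0 : 0 < Nat.lcm d e := Nat.pos_of_ne_zero (Nat.lcm_ne_zero hd0.ne' he0.ne')
  -- prime factors of lcm and gcd
  have hlpf : (Nat.lcm d e).primeFactors = d.primeFactors ∪ e.primeFactors := by
    ext p
    simp only [Nat.mem_primeFactors, Finset.mem_union]
    constructor
    · rintro ⟨hp, hdvd, -⟩
      have : p ∣ d * e := hdvd.trans (Nat.lcm_dvd_mul d e)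
      rcases (Nat.Prime.dvd_mul hp).mp this with h | h
      · exact Or.inl ⟨hp, h, hd0.ne'⟩
      · exact Or.inr ⟨hp, h, he0.ne'⟩
    · rintro (⟨hp, h, -⟩ | ⟨hp, h, -⟩)
      · exact ⟨hp, h.trans (Nat.dvd_lcm_left d e), hl0.ne'⟩
      · exact ⟨hp, h.trans (Nat.dvd_lcm_right d e), hl0.ne'⟩
  have hgpf : (Nat.gcd d e).primeFactors = d.primeFactors ∩ e.primeFactors :=
    Nat.primeFactors_gcd hd0.ne' he0.ne'
  -- key identity: φ(lcm) * φ(gcd) = φ(d) * φ(e) over ℝ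
  have hkey : ((Nat.lcm d e).totient : ℝ) * ((Nat.gcd d e).totient : ℝ)
      = (d.totient : ℝ) * (e.totient : ℝ) := by
    rw [htot _ hl hl0, htot _ hg hg0, htot _ hd hd0, htot _ he he0, hlpf, hgpf]
    exact Finset.prod_union_inter
  have hlt0 : ((Nat.lcm d e).totient : ℝ) ≠ 0 := by
    exact_mod_cast (Nat.totient_pos.mpr hl0).ne'
  have hdt0 : ((d.totient : ℝ)) ≠ 0 := by exact_mod_cast (Nat.totient_pos.mpr hd0).ne'
  have het0 : ((e.totient : ℝ)) ≠ 0 := by exact_mod_cast (Nat.totient_pos.mpr he0).ne'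
  rw [hsum, ← htot _ hg hg0]
  field_simp
  linarith [hkey]
end

section
/- For any positive integer δ and any prime p with p ∤ δ, and any arithmetic function λ supported on squarefree tuples, the identity Σ'_{d,e} λ_d λ_e · δ·p/lcm(d, e, δ·p) = Σ'_{d,e: p∤d, p∤e} (λ_d + λ_{pd})(λ_e + λ_{pe}) · δ/lcm(d,e,δ) holds, where Σ' restricts to squarefree d, e. In the one-variable special case δ = 1: Σ_{d,e squarefree} λ_d λ_e · p/lcm(d,e,p) = Σ_{d,e squarefree, p∤d,e} (λ_d + λ_{pd})(λ_e + λ_{pe})/lcm(d,e). -/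
private lemma aux_summable {α : Type*} {f : α → ℝ} (h : (Function.support f).Finite) :
    Summable f := by
  apply summable_of_ne_finset_zero (s := h.toFinset)
  intro b hb
  by_contra hb'
  exact hb (h.mem_toFinset.2 hb')

private lemma aux_key (p : ℕ) (hp : p.Prime) (k : ℕ → ℝ)
    (hfin : (Function.support k).Finite)
    (hsq : ∀ n, k n ≠ 0 → Squarefree n) :
    ∑' d, k d = ∑' d : ℕ, if ¬ p ∣ d then k d + k (p * d) else 0 := by
  have hp0 : (p : ℕ) ≠ 0 := hp.ne_zero
  have hinj : Function.Injective (fun d : ℕ => p * d) := mul_right_injective₀ hp0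
  set f1 : ℕ → ℝ := fun d => if ¬ p ∣ d then k d else 0 with hf1
  set f2 : ℕ → ℝ := fun d => if p ∣ d then k d else 0 with hf2
  set g2 : ℕ → ℝ := fun d => if ¬ p ∣ d then k (p * d) else 0 with hg2
  have hs1 : Summable f1 := by
    apply aux_summable (hfin.subset ?_)
    intro d hd
    simp only [hf1, Function.mem_support] at hd ⊢
    intro h0; apply hd; simp [h0]
  have hs2 : Summable f2 := by
    apply aux_summable (hfin.subset ?_)
    intro d hd
    simp only [hf2, Function.mem_support] at hd ⊢
    intro h0; apply hd; simp [h0]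
  have hsg : Summable g2 := by
    apply aux_summable (((hfin.preimage (hinj.injOn)).subset ?_))
    intro d hd
    simp only [hg2, Function.mem_support, Set.mem_preimage] at hd ⊢
    intro h0; apply hd; simp [h0]
  have h21 : ∑' d, f2 d = ∑' d, g2 d := by
    apply tsum_eq_tsum_of_ne_zero_bij (fun x => p * (x : ℕ))
    · intro x y hxy
      exact Subtype.ext (hinj hxy)
    · intro d hd
      simp only [hf2, Function.mem_support] at hd
      by_cases hdvd : p ∣ d
      · obtain ⟨d', rfl⟩ := hdvd
        have hk : k (p * d') ≠ 0 := by simpa [hf2] using hd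
        have hnd : ¬ p ∣ d' := by
          rintro ⟨c, rfl⟩
          exact hp.not_isUnit ((hsq _ hk) p ⟨c, by ring⟩)
        exact ⟨⟨d', by simp [hg2, hnd, hk]⟩, rfl⟩
      · exact absurd (by simp [hf2, hdvd]) hd
    · rintro ⟨x, hx⟩
      simp only [hg2, Function.mem_support] at hx
      have hnx : ¬ p ∣ x := by intro h; exact hx (by simp [h])
      simp [hf2, hg2, hnx, Dvd.intro x rfl]
  have hsplit : ∀ d, k d = f1 d + f2 d := by
    intro d
    by_cases h : p ∣ d <;> simp [hf1, hf2, h]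
  calc ∑' d, k d = ∑' d, (f1 d + f2 d) := tsum_congr hsplit
    _ = (∑' d, f1 d) + ∑' d, f2 d := Summable.tsum_add hs1 hs2
    _ = (∑' d, f1 d) + ∑' d, g2 d := by rw [h21]
    _ = ∑' d, (f1 d + g2 d) := (Summable.tsum_add hs1 hsg).symm
    _ = _ := by
        apply tsum_congr
        intro d
        by_cases h : p ∣ d <;> simp [hf1, hg2, h]

private lemma aux_lcm {p m d : ℕ} (hp : p.Prime) (hpm : ¬ p ∣ m) (hpd : ¬ p ∣ d) :
    Nat.lcm m (d * p) = p * Nat.lcm m d := by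
  have c1 : Nat.Coprime p m := (hp.coprime_iff_not_dvd).2 hpm
  have c2 : Nat.Coprime p d := (hp.coprime_iff_not_dvd).2 hpd
  have cl : Nat.Coprime p (Nat.lcm m d) :=
    Nat.Coprime.coprime_dvd_right (Nat.lcm_dvd (dvd_mul_right m d) (dvd_mul_left d m))
      (c1.mul_right c2)
  apply Nat.dvd_antisymm
  · apply Nat.lcm_dvd
    · exact (Nat.dvd_lcm_left m d).mul_left p
    · rw [mul_comm p]
      exact mul_dvd_mul (Nat.dvd_lcm_right m d) dvd_rfl
  · apply cl.mul_dvd_of_dvd_of_dvd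
    · exact dvd_trans (dvd_mul_left p d) (Nat.dvd_lcm_right _ _)
    · exact Nat.lcm_dvd (Nat.dvd_lcm_left _ _)
        ((dvd_mul_right d p).trans (Nat.dvd_lcm_right _ _))

private lemma aux_lcm2 {p d e : ℕ} (hp : p.Prime) (hpd : ¬ p ∣ d) (hpe : ¬ p ∣ e) :
    Nat.lcm (p * d) e = p * Nat.lcm d e := by
  have c1 : Nat.Coprime p d := (hp.coprime_iff_not_dvd).2 hpd
  have c2 : Nat.Coprime p e := (hp.coprime_iff_not_dvd).2 hpe
  have cl : Nat.Coprime p (Nat.lcm d e) :=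
    Nat.Coprime.coprime_dvd_right (Nat.lcm_dvd (dvd_mul_right d e) (dvd_mul_left e d))
      (c1.mul_right c2)
  apply Nat.dvd_antisymm
  · apply Nat.lcm_dvd
    · exact mul_dvd_mul_left p (Nat.dvd_lcm_left d e)
    · exact (Nat.dvd_lcm_right d e).mul_left p
  · apply cl.mul_dvd_of_dvd_of_dvd
    · exact dvd_trans (dvd_mul_right p d) (Nat.dvd_lcm_left _ _)
    · exact Nat.lcm_dvd ((dvd_mul_left d p).trans (Nat.dvd_lcm_left _ _)) (Nat.dvd_lcm_right _ _)

/-- For a positive integer `δ`, a prime `p ∤ δ`, and `λ` finitely supported on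
squarefree integers:
`Σ_{d,e squarefree} λ_d λ_e · δp/lcm(d,e,δp)
  = Σ_{d,e squarefree, p∤d, p∤e} (λ_d + λ_{pd})(λ_e + λ_{pe}) · δ/lcm(d,e,δ)`. -/
theorem stmt_16 (δ p : ℕ) (hδ : 0 < δ) (hp : p.Prime) (hpδ : ¬ p ∣ δ)
    (lam : ℕ → ℝ) (hfin : (Function.support lam).Finite)
    (hsupp : ∀ n, lam n ≠ 0 → Squarefree n) :
    (∑' de : ℕ × ℕ, if Squarefree de.1 ∧ Squarefree de.2 then
        lam de.1 * lam de.2 * ((δ * p : ℕ) : ℝ)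
          / (Nat.lcm (Nat.lcm de.1 de.2) (δ * p) : ℝ)
      else 0)
    = ∑' de : ℕ × ℕ,
        if Squarefree de.1 ∧ Squarefree de.2 ∧ ¬ p ∣ de.1 ∧ ¬ p ∣ de.2 then
          (lam de.1 + lam (p * de.1)) * (lam de.2 + lam (p * de.2)) * (δ : ℝ)
            / (Nat.lcm (Nat.lcm de.1 de.2) δ : ℝ)
        else 0 := by
  have hp0 : (p : ℕ) ≠ 0 := hp.ne_zero
  have hinj : Function.Injective (fun d : ℕ => p * d) := mul_right_injective₀ hp0
  set F : ℕ × ℕ → ℝ := fun de =>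
    if Squarefree de.1 ∧ Squarefree de.2 then
      lam de.1 * lam de.2 * ((δ * p : ℕ) : ℝ)
        / (Nat.lcm (Nat.lcm de.1 de.2) (δ * p) : ℝ)
    else 0 with hF
  set G : ℕ × ℕ → ℝ := fun de =>
    if Squarefree de.1 ∧ Squarefree de.2 ∧ ¬ p ∣ de.1 ∧ ¬ p ∣ de.2 then
      (lam de.1 + lam (p * de.1)) * (lam de.2 + lam (p * de.2)) * (δ : ℝ)
        / (Nat.lcm (Nat.lcm de.1 de.2) δ : ℝ)
    else 0 with hG
  -- basic support facts for F
  have hFz1 : ∀ d e, lam d = 0 → F (d, e) = 0 := by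
    intro d e h0; simp [hF, h0]
  have hFz2 : ∀ d e, lam e = 0 → F (d, e) = 0 := by
    intro d e h0; simp [hF, h0]
  have hFfin : (Function.support F).Finite := by
    apply (hfin.prod hfin).subset
    intro de hde
    simp only [Function.mem_support] at hde
    constructor
    · intro h0; exact hde (hFz1 _ _ h0)
    · intro h0; exact hde (hFz2 _ _ h0)
  have hFsum : Summable F := aux_summable hFfin
  -- inner function setup
  have hFinner : ∀ d, (Function.support fun e => F (d, e)).Finite := by
    intro d
    apply hfin.subset
    intro e he
    simp only [Function.mem_support] at he ⊢
    intro h0; exact he (hFz2 _ _ h0)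
  have hFinnerSum : ∀ d, Summable (fun e => F (d, e)) :=
    fun d => aux_summable (hFinner d)
  -- step 1: iterate the tsum
  rw [Summable.tsum_prod' hFsum hFinnerSum]
  -- step 2: apply the key lemma in e for each fixed d
  have step2 : ∀ d : ℕ, ∑' e, F (d, e)
      = ∑' e : ℕ, if ¬ p ∣ e then F (d, e) + F (d, p * e) else 0 := by
    intro d
    apply aux_key p hp _ (hFinner d)
    intro e he
    by_contra hne
    exact he (by simp [hF, hne])
  -- define H
  set H : ℕ → ℝ := fun d => ∑' e : ℕ, if ¬ p ∣ e then F (d, e) + F (d, p * e) else 0 with hH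
  have hHzero : ∀ d, lam d = 0 ∨ ¬ Squarefree d → H d = 0 := by
    intro d hd
    have : ∀ e : ℕ, (if ¬ p ∣ e then F (d, e) + F (d, p * e) else 0) = 0 := by
      intro e
      have h1 : F (d, e) = 0 := by
        rcases hd with h | h
        · exact hFz1 _ _ h
        · simp [hF, h]
      have h2 : F (d, p * e) = 0 := by
        rcases hd with h | h
        · exact hFz1 _ _ h
        · simp [hF, h]
      simp [h1, h2]
    simp only [hH]
    rw [tsum_congr this, tsum_zero]
  have hHfin : (Function.support H).Finite := by
    apply hfin.subset
    intro d hd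
    simp only [Function.mem_support] at hd ⊢
    intro h0; exact hd (hHzero d (Or.inl h0))
  have hHsq : ∀ d, H d ≠ 0 → Squarefree d := by
    intro d hd
    by_contra h
    exact hd (hHzero d (Or.inr h))
  have step3 : ∑' d, H d = ∑' d : ℕ, if ¬ p ∣ d then H d + H (p * d) else 0 :=
    aux_key p hp H hHfin hHsq
  -- now tie it all together
  have hGinnerSum : ∀ d, Summable (fun e => G (d, e)) := by
    intro d
    apply aux_summable
    apply (hfin.union (hfin.preimage hinj.injOn)).subset
    intro e he
    simp only [Function.mem_support, Set.mem_union, Set.mem_preimage] at he ⊢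
    by_contra hc
    push_neg at hc
    exact he (by simp [hG, hc.1, hc.2])
  have hGsum : Summable G := by
    apply aux_summable
    apply ((hfin.union (hfin.preimage hinj.injOn)).prod
      (hfin.union (hfin.preimage hinj.injOn))).subset
    intro de hde
    simp only [Function.mem_support] at hde
    constructor <;>
    · simp only [Set.mem_union, Function.mem_support, Set.mem_preimage]
      by_contra hc
      push_neg at hc
      apply hde
      simp [hG, hc.1, hc.2]
  rw [Summable.tsum_prod' hGsum hGinnerSum]
  rw [tsum_congr step2]
  rw [step3]
  apply tsum_congr
  intro d
  by_cases hpd : p ∣ d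
  · have : ∀ e : ℕ, G (d, e) = 0 := by
      intro e; simp [hG, hpd]
    rw [if_neg (not_not_intro hpd), tsum_congr this, tsum_zero]
  · rw [if_pos hpd]
    -- H d + H (p*d) = ∑' e, G (d, e)
    have hsum1 : Summable (fun e : ℕ => if ¬ p ∣ e then F (d, e) + F (d, p * e) else 0) := by
      apply aux_summable
      apply ((hfin.union (hfin.preimage hinj.injOn)).subset)
      intro e he
      simp only [Function.mem_support, Set.mem_union, Set.mem_preimage] at he ⊢
      by_contra hc
      push_neg at hc
      exact he (by simp [hFz2 _ _ hc.1, hFz2 _ _ hc.2])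
    have hsum2 : Summable (fun e : ℕ => if ¬ p ∣ e then F (p * d, e) + F (p * d, p * e) else 0) := by
      apply aux_summable
      apply ((hfin.union (hfin.preimage hinj.injOn)).subset)
      intro e he
      simp only [Function.mem_support, Set.mem_union, Set.mem_preimage] at he ⊢
      by_contra hc
      push_neg at hc
      exact he (by simp [hFz2 _ _ hc.1, hFz2 _ _ hc.2])
    simp only [hH]
    rw [← Summable.tsum_add hsum1 hsum2]
    apply tsum_congr
    intro e
    by_cases hpe : p ∣ e
    · simp [hG, hpe, hpd]
    · rw [if_pos hpe, if_pos hpe]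
      -- the arithmetic core
      by_cases hsd : Squarefree d
      · by_cases hse : Squarefree e
        · have hsp : Squarefree p := hp.squarefree
          have hspd : Squarefree (p * d) :=
            (Nat.squarefree_mul ((hp.coprime_iff_not_dvd).2 hpd)).2 ⟨hsp, hsd⟩
          have hspe : Squarefree (p * e) :=
            (Nat.squarefree_mul ((hp.coprime_iff_not_dvd).2 hpe)).2 ⟨hsp, hse⟩
          have hde : ¬ p ∣ Nat.lcm d e := by
            intro h
            have h2 : p ∣ d * e := h.trans (Nat.lcm_dvd (dvd_mul_right d e) (dvd_mul_left e d))
            rcases (Nat.Prime.dvd_mul hp).1 h2 with h' | h'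
            · exact hpd h'
            · exact hpe h'
          -- all four lcm's equal p * L
          have l1 : Nat.lcm (Nat.lcm d e) (δ * p) = p * Nat.lcm (Nat.lcm d e) δ :=
            aux_lcm hp hde hpδ
          have l2 : Nat.lcm (Nat.lcm (p * d) e) (δ * p) = p * Nat.lcm (Nat.lcm d e) δ := by
            rw [aux_lcm2 hp hpd hpe, mul_comm δ p, Nat.lcm_mul_left]
          have l3 : Nat.lcm (Nat.lcm d (p * e)) (δ * p) = p * Nat.lcm (Nat.lcm d e) δ := by
            rw [Nat.lcm_comm d (p * e), aux_lcm2 hp hpe hpd, Nat.lcm_comm e d,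
              mul_comm δ p, Nat.lcm_mul_left]
          have l4 : Nat.lcm (Nat.lcm (p * d) (p * e)) (δ * p) = p * Nat.lcm (Nat.lcm d e) δ := by
            rw [Nat.lcm_mul_left, mul_comm δ p, Nat.lcm_mul_left]
          have hL0 : (Nat.lcm (Nat.lcm d e) δ : ℕ) ≠ 0 := by
            apply Nat.lcm_ne_zero
            · exact Nat.lcm_ne_zero hsd.ne_zero hse.ne_zero
            · exact hδ.ne'
          simp only [hF, hG]
          rw [if_pos ⟨hsd, hse⟩, if_pos ⟨hsd, hspe⟩, if_pos ⟨hspd, hse⟩,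
            if_pos ⟨hspd, hspe⟩, if_pos ⟨hsd, hse, hpd, hpe⟩]
          simp only [l1, l2, l3, l4]
          have hL0' : ((Nat.lcm (Nat.lcm d e) δ : ℕ) : ℝ) ≠ 0 := Nat.cast_ne_zero.2 hL0
          have hp0' : ((p : ℕ) : ℝ) ≠ 0 := Nat.cast_ne_zero.2 hp0
          push_cast
          field_simp
        · have h1 : ¬ (Squarefree d ∧ Squarefree e) := fun h => hse h.2
          have h2 : ¬ (Squarefree d ∧ Squarefree (p * e)) := by
            rintro ⟨-, h⟩
            exact hse (h.squarefree_of_dvd (dvd_mul_left e p))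
          have h3 : ¬ (Squarefree (p * d) ∧ Squarefree e) := fun h => hse h.2
          have h4 : ¬ (Squarefree (p * d) ∧ Squarefree (p * e)) := by
            rintro ⟨-, h⟩
            exact hse (h.squarefree_of_dvd (dvd_mul_left e p))
          simp [hF, hG, h1, h2, h3, h4, hse]
      · have h1 : ¬ (Squarefree d ∧ Squarefree e) := fun h => hsd h.1
        have h2 : ¬ (Squarefree d ∧ Squarefree (p * e)) := fun h => hsd h.1
        have h3 : ¬ (Squarefree (p * d) ∧ Squarefree e) := by
          rintro ⟨h, -⟩
          exact hsd (h.squarefree_of_dvd (dvd_mul_left d p))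
        have h4 : ¬ (Squarefree (p * d) ∧ Squarefree (p * e)) := by
          rintro ⟨h, -⟩
          exact hsd (h.squarefree_of_dvd (dvd_mul_left d p))
        simp [hF, hG, h1, h2, h3, h4, hsd]
end
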